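/- For an odd prime p, the central element of k[GL_2(F_p)] given by the sum of all unipotent reflections (elements conjugate to the Jordan block [[1,1],[0,1]]) acts on the symmetric power S^i(k^2) (char k = p) by -1 if 0 ≤ i < p-1 and by 0 if i = p-1. -/

import Mathlib

set_option maxRecDepth 100000

open Finset

/-! ### Character sums over finite fields -/

section Sums

variable {p : ℕ} [Fact p.Prime] {k : Type*} [CommRing k]

lemma ucs_sumU (χ : ZMod p →+* k) (m : ℕ) :
    ∑ t : (ZMod p)ˣ, (χ (t : ZMod p)) ^ m = if (p - 1) ∣ m then (-1 : k) else 0 := by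
  have h := FiniteField.sum_pow_units (ZMod p) m
  rw [ZMod.card] at h
  calc ∑ t : (ZMod p)ˣ, (χ (t : ZMod p)) ^ m = χ (∑ t : (ZMod p)ˣ, ((t : ZMod p)) ^ m) := by
        rw [map_sum]; exact Finset.sum_congr rfl fun t _ => (map_pow χ _ _).symm
    _ = _ := by rw [h, apply_ite χ, map_neg, map_one, map_zero]

lemma ucs_zmod_sum_pow (m : ℕ) (hm : m ≠ 0) :
    ∑ c : ZMod p, c ^ m = if (p - 1) ∣ m then (-1 : ZMod p) else 0 := by
  classical
  let φ : (ZMod p)ˣ ↪ ZMod p := ⟨fun x ↦ x, fun _ _ h => Units.ext h⟩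
  have hmap : Finset.univ.map φ = Finset.univ \ {0} := by
    ext x
    simp only [Finset.mem_map, Finset.mem_univ, true_and, Finset.mem_sdiff, Finset.mem_singleton]
    constructor
    · rintro ⟨t, rfl⟩
      exact t.ne_zero
    · intro hx
      exact ⟨(Units.mk0 x hx), rfl⟩
  calc ∑ c : ZMod p, c ^ m = ∑ c ∈ univ \ {(0 : ZMod p)}, c ^ m := by
        rw [← Finset.sum_sdiff (Finset.subset_univ {0}), Finset.sum_singleton, zero_pow hm,
          add_zero]
    _ = ∑ t : (ZMod p)ˣ, ((t : ZMod p)) ^ m := by rw [← hmap, Finset.sum_map]; rfl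
    _ = _ := by rw [FiniteField.sum_pow_units, ZMod.card]

lemma ucs_sumF (χ : ZMod p →+* k) (m : ℕ) :
    ∑ c : ZMod p, (χ c) ^ m = if m ≠ 0 ∧ (p - 1) ∣ m then (-1 : k) else 0 := by
  rcases eq_or_ne m 0 with rfl | hm
  · simp only [pow_zero, Finset.sum_const, Finset.card_univ, ZMod.card, nsmul_eq_mul, mul_one,
      ne_eq, not_true_eq_false, false_and, if_false]
    rw [← map_natCast χ p, ZMod.natCast_self, map_zero]
  · calc ∑ c : ZMod p, (χ c) ^ m = χ (∑ c : ZMod p, c ^ m) := by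
          rw [map_sum]; exact Finset.sum_congr rfl fun t _ => (map_pow χ _ _).symm
      _ = _ := by
          rw [ucs_zmod_sum_pow m hm, apply_ite χ, map_neg, map_one, map_zero]
          simp [hm]

lemma ucs_choose (b : ℕ) (hb : b ≤ p - 1) :
    (((p - 1).choose b : ℕ) : ZMod p) = (-1 : ZMod p) ^ b := by
  induction b with
  | zero => simp
  | succ b ih =>
    have hp : 1 ≤ p := (Fact.out : p.Prime).one_lt.le
    have hb' : b ≤ p - 1 := le_trans (Nat.le_succ b) hb
    have hbp : b + 1 < p := by omega
    have hcancel : ((b + 1 : ℕ) : ZMod p) ≠ 0 := by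
      rw [Ne, ZMod.natCast_eq_zero_iff]
      intro hdvd
      exact absurd (Nat.le_of_dvd (Nat.succ_pos b) hdvd) (by omega)
    have key := congrArg (fun n : ℕ => (n : ZMod p)) (Nat.choose_succ_right_eq (p - 1) b)
    simp only [Nat.cast_mul] at key
    have hsub : (((p - 1 - b : ℕ)) : ZMod p) = -((b + 1 : ℕ) : ZMod p) := by
      have h1 : p - 1 - b = p - (b + 1) := by omega
      rw [h1, Nat.cast_sub (by omega), ZMod.natCast_self, zero_sub]
    rw [hsub, ih hb'] at key
    apply mul_right_cancel₀ hcancel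
    rw [key]
    push_cast
    ring

lemma ucs_choose_k (χ : ZMod p →+* k) (b : ℕ) (hb : b ≤ p - 1) :
    (((p - 1).choose b : ℕ) : k) = (-1 : k) ^ b := by
  rw [← map_natCast χ, ucs_choose b hb, map_pow, map_neg, map_one]

end Sums

lemma ucs_nat_div (P m : ℕ) (hP : 0 < P) (hm : m ≠ 0) (hdvd : P ∣ m) (hle : m ≤ 2 * P) :
    m = P ∨ m = 2 * P := by
  obtain ⟨q, rfl⟩ := hdvd
  have hq0 : q ≠ 0 := by rintro rfl; simp at hm
  have hle' : P * q ≤ P * 2 := by rwa [mul_comm 2 P] at hle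
  have hq2 : q ≤ 2 := Nat.le_of_mul_le_mul_left hle' hP
  have : q = 1 ∨ q = 2 := by omega
  rcases this with rfl | rfl
  · exact Or.inl (mul_one P)
  · exact Or.inr (mul_comm P 2)

/-! ### The three binomial-expansion lemmas -/

section Core
variable {p : ℕ} [Fact p.Prime] {k : Type*} [CommRing k]

lemma ucs_L1 (χ : ZMod p →+* k) (a b : ℕ) (ha : a ≤ p - 1) (x y : k) :
    ∑ t : (ZMod p)ˣ, (x + χ (t : ZMod p) * y) ^ a * y ^ b
      = -(x ^ a * y ^ b) + (if a = p - 1 then -(y ^ (p - 1) * y ^ b) else 0) := by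
  have e1 : ∀ t : (ZMod p)ˣ, (x + χ (t : ZMod p) * y) ^ a * y ^ b
      = ∑ j ∈ range (a + 1), (χ (t : ZMod p)) ^ (a - j) * (x ^ j * y ^ (a - j) * (a.choose j) * y ^ b) := by
    intro t
    rw [add_pow, Finset.sum_mul]
    refine Finset.sum_congr rfl fun j _ => ?_
    rw [mul_pow]
    ring
  have e2 : ∑ t : (ZMod p)ˣ, (x + χ (t : ZMod p) * y) ^ a * y ^ b
      = ∑ j ∈ range (a + 1), (if (p - 1) ∣ (a - j) then (-1 : k) else 0)
          * (x ^ j * y ^ (a - j) * (a.choose j) * y ^ b) := by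
    rw [Finset.sum_congr rfl fun t _ => e1 t, Finset.sum_comm]
    exact Finset.sum_congr rfl fun j _ => by rw [← Finset.sum_mul, ucs_sumU χ]
  rw [e2, Finset.sum_range_succ]
  have hlast : (if (p - 1) ∣ (a - a) then (-1 : k) else 0)
      * (x ^ a * y ^ (a - a) * (a.choose a) * y ^ b) = -(x ^ a * y ^ b) := by
    rw [Nat.sub_self, if_pos (dvd_zero _), Nat.choose_self]
    push_cast
    ring
  have hfront : ∑ j ∈ range a, (if (p - 1) ∣ (a - j) then (-1 : k) else 0)
      * (x ^ j * y ^ (a - j) * (a.choose j) * y ^ b)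
      = if a = p - 1 then -(y ^ (p - 1) * y ^ b) else 0 := by
    have hp1 : 1 ≤ p - 1 := by
      have := (Fact.out : p.Prime).two_le
      omega
    by_cases hap : a = p - 1
    · rw [if_pos hap]
      have h0mem : 0 ∈ range a := mem_range.mpr (by omega)
      rw [Finset.sum_eq_single_of_mem 0 h0mem ?_]
      · rw [Nat.sub_zero, hap, if_pos dvd_rfl, Nat.choose_zero_right]
        push_cast
        ring
      · intro j hj hj0
        rw [if_neg, zero_mul]
        intro hdvd
        have hle := Nat.le_of_dvd (by rw [mem_range] at hj; omega) hdvd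
        rw [mem_range] at hj
        omega
    · rw [if_neg hap]
      apply Finset.sum_eq_zero
      intro j hj
      rw [mem_range] at hj
      rw [if_neg, zero_mul]
      intro hdvd
      have hle := Nat.le_of_dvd (by omega) hdvd
      omega
  rw [hlast, hfront, add_comm]

lemma ucs_L2 (χ : ZMod p →+* k) (a b : ℕ) (hab : a + b ≤ p - 1) (hp2 : 2 ≤ p - 1) (x y w g : k) :
    ∑ t : (ZMod p)ˣ, (x + χ (t : ZMod p) * (g * w)) ^ a * (y - χ (t : ZMod p) * w) ^ b
      = -(x ^ a * y ^ b)
        - (if a + b = p - 1 then (-1 : k) ^ b * g ^ a * w ^ (p - 1) else 0) := by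
  set A : Finset (ℕ × ℕ) := range (a + 1) ×ˢ range (b + 1) with hA
  set K : ℕ × ℕ → k := fun q =>
    x ^ q.1 * y ^ q.2 * g ^ (a - q.1) * (-1 : k) ^ (b - q.2) * w ^ ((a - q.1) + (b - q.2))
      * (a.choose q.1) * (b.choose q.2) with hK
  have e1 : ∀ t : (ZMod p)ˣ, (x + χ (t : ZMod p) * (g * w)) ^ a * (y - χ (t : ZMod p) * w) ^ b
      = ∑ q ∈ A, (χ (t : ZMod p)) ^ ((a - q.1) + (b - q.2)) * K q := by
    intro t
    rw [sub_eq_add_neg, add_pow, add_pow, Finset.sum_mul_sum, hA, Finset.sum_product]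
    refine Finset.sum_congr rfl fun j _ => Finset.sum_congr rfl fun l _ => ?_
    rw [hK]
    simp only [mul_pow, neg_pow (χ (t : ZMod p) * w)]
    ring
  have e2 : ∑ t : (ZMod p)ˣ, (x + χ (t : ZMod p) * (g * w)) ^ a * (y - χ (t : ZMod p) * w) ^ b
      = ∑ q ∈ A, (if (p - 1) ∣ ((a - q.1) + (b - q.2)) then (-1 : k) else 0) * K q := by
    rw [Finset.sum_congr rfl fun t _ => e1 t, Finset.sum_comm]
    exact Finset.sum_congr rfl fun q _ => by rw [← Finset.sum_mul, ucs_sumU χ]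
  rw [e2]
  have hmem : (a, b) ∈ A := by
    rw [hA, Finset.mem_product]
    exact ⟨mem_range.mpr (by omega), mem_range.mpr (by omega)⟩
  by_cases hd : a + b = p - 1
  · have hmem0 : ((0 : ℕ), (0 : ℕ)) ∈ A := by
      rw [hA, Finset.mem_product]
      exact ⟨mem_range.mpr (by omega), mem_range.mpr (by omega)⟩
    have hne : (a, b) ≠ ((0 : ℕ), (0 : ℕ)) := by
      intro h
      rw [Prod.ext_iff] at h
      omega
    rw [Finset.sum_eq_add_of_mem (a, b) ((0 : ℕ), (0 : ℕ)) hmem hmem0 hne ?_]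
    · rw [if_pos hd]
      have h1 : (if (p - 1) ∣ ((a - a) + (b - b)) then (-1 : k) else 0) = -1 := by
        simp
      have h2 : (if (p - 1) ∣ ((a - 0) + (b - 0)) then (-1 : k) else 0) = -1 := by
        rw [Nat.sub_zero, Nat.sub_zero, hd]
        exact if_pos dvd_rfl
      rw [h1, h2, hK]
      simp only [Nat.sub_self, Nat.sub_zero, Nat.choose_self, Nat.choose_zero_right, hd]
      push_cast
      ring
    · rintro ⟨j, l⟩ hq ⟨hq1, hq2⟩
      rw [hA, Finset.mem_product, mem_range, mem_range] at hq
      rw [if_neg, zero_mul]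
      intro hdvd
      rcases Nat.eq_zero_or_pos ((a - j) + (b - l)) with h0 | hpos
      · apply hq1
        rw [Prod.ext_iff]
        constructor <;> simp <;> omega
      · have hle := Nat.le_of_dvd hpos hdvd
        apply hq2
        rw [Prod.ext_iff]
        constructor <;> simp <;> omega
  · rw [if_neg hd, sub_zero, Finset.sum_eq_single_of_mem (a, b) hmem ?_]
    · have h1 : (if (p - 1) ∣ ((a - a) + (b - b)) then (-1 : k) else 0) = -1 := by
        simp
      rw [h1, hK]
      simp only [Nat.choose_self, Nat.sub_self]
      push_cast
      ring
    · rintro ⟨j, l⟩ hq hq1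
      rw [hA, Finset.mem_product, mem_range, mem_range] at hq
      rw [if_neg, zero_mul]
      intro hdvd
      rcases Nat.eq_zero_or_pos ((a - j) + (b - l)) with h0 | hpos
      · apply hq1
        rw [Prod.ext_iff]
        constructor <;> simp <;> omega
      · have hle := Nat.le_of_dvd hpos hdvd
        omega

lemma ucs_L3 (χ : ZMod p →+* k) (a b : ℕ) (hd : a + b = p - 1) (hev : Even (p - 1))
    (hp2 : 2 ≤ p - 1) (x y : k) :
    ∑ c : ZMod p, (χ c) ^ a * (x + χ c * y) ^ (p - 1)
      = -((-1 : k) ^ a * (x ^ a * y ^ b)) - (if a = p - 1 then y ^ (p - 1) else 0) := by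
  have e1 : ∀ c : ZMod p, (χ c) ^ a * (x + χ c * y) ^ (p - 1)
      = ∑ j ∈ range ((p - 1) + 1), (χ c) ^ (a + (p - 1 - j)) * (x ^ j * y ^ (p - 1 - j) * ((p - 1).choose j)) := by
    intro c
    rw [add_pow, Finset.mul_sum]
    refine Finset.sum_congr rfl fun j _ => ?_
    rw [mul_pow]
    ring
  have e2 : ∑ c : ZMod p, (χ c) ^ a * (x + χ c * y) ^ (p - 1)
      = ∑ j ∈ range ((p - 1) + 1),
          (if a + (p - 1 - j) ≠ 0 ∧ (p - 1) ∣ (a + (p - 1 - j)) then (-1 : k) else 0)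
            * (x ^ j * y ^ (p - 1 - j) * ((p - 1).choose j)) := by
    rw [Finset.sum_congr rfl fun c _ => e1 c, Finset.sum_comm]
    exact Finset.sum_congr rfl fun j _ => by rw [← Finset.sum_mul, ucs_sumF χ]
  rw [e2]
  have hb : b = p - 1 - a := by omega
  have hamem : a ∈ range ((p - 1) + 1) := mem_range.mpr (by omega)
  have hzero : ∀ j ∈ range ((p - 1) + 1), j ≠ a → j ≠ 0 →
      (if a + (p - 1 - j) ≠ 0 ∧ (p - 1) ∣ (a + (p - 1 - j)) then (-1 : k) else 0)
        * (x ^ j * y ^ (p - 1 - j) * ((p - 1).choose j)) = 0 := by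
    intro j hj hja hj0
    rw [mem_range] at hj
    rw [if_neg, zero_mul]
    rintro ⟨hm0, hdvd⟩
    rcases ucs_nat_div (p - 1) _ (by omega) hm0 hdvd (by omega) with h | h <;> omega
  by_cases hap : a = p - 1
  · have hb0 : b = 0 := by omega
    have h0mem : (0 : ℕ) ∈ range ((p - 1) + 1) := mem_range.mpr (by omega)
    have hne : a ≠ 0 := by omega
    rw [Finset.sum_eq_add_of_mem a 0 hamem h0mem hne
      (fun j hj ⟨hja, hj0⟩ => hzero j hj hja hj0)]
    have h1 : (if a + (p - 1 - a) ≠ 0 ∧ (p - 1) ∣ (a + (p - 1 - a)) then (-1 : k) else 0) = -1 := by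
      rw [if_pos]
      constructor
      · omega
      · have : a + (p - 1 - a) = p - 1 := by omega
        rw [this]
    have h2 : (if a + (p - 1 - 0) ≠ 0 ∧ (p - 1) ∣ (a + (p - 1 - 0)) then (-1 : k) else 0) = -1 := by
      rw [if_pos]
      constructor
      · omega
      · have : a + (p - 1 - 0) = 2 * (p - 1) := by omega
        rw [this]
        exact ⟨2, by ring⟩
    have h3 : p - 1 - a = 0 := by omega
    have h4 : p - 1 - 0 = p - 1 := by omega
    rw [h1, h2, h3, h4, if_pos hap, hb0, hap, Nat.choose_self, Nat.choose_zero_right,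
      Even.neg_one_pow hev]
    push_cast
    ring
  · rw [Finset.sum_eq_single_of_mem a hamem
      (fun j hj hja => by
        rcases eq_or_ne j 0 with rfl | hj0
        · rw [if_neg, zero_mul]
          rintro ⟨hm0, hdvd⟩
          rcases ucs_nat_div (p - 1) _ (by omega) hm0 hdvd (by omega) with h | h <;> omega
        · exact hzero j hj hja hj0)]
    have h1 : (if a + (p - 1 - a) ≠ 0 ∧ (p - 1) ∣ (a + (p - 1 - a)) then (-1 : k) else 0) = -1 := by
      rw [if_pos]
      constructor
      · omega
      · have : a + (p - 1 - a) = p - 1 := by omega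
        rw [this]
    rw [h1, if_neg hap, ← hb, ucs_choose_k χ a (by omega)]
    ring

/-! ### The scalar core identity -/

lemma ucs_core (χ : ZMod p →+* k) (hodd : Odd p) (a b : ℕ) (hab : a + b ≤ p - 1) (x y : k) :
    (∑ c : ZMod p, ∑ t : (ZMod p)ˣ,
        (x + χ (t : ZMod p) * (χ c * (x + χ c * y))) ^ a
          * (y - χ (t : ZMod p) * (x + χ c * y)) ^ b)
      + ∑ t : (ZMod p)ˣ, (x + χ (t : ZMod p) * y) ^ a * y ^ b
      = (if a + b = p - 1 then 0 else -1) * (x ^ a * y ^ b) := by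
  have hp : p.Prime := Fact.out
  have hp3 : 3 ≤ p := by
    rcases hp.eq_two_or_odd' with h2 | _
    · exact absurd h2 (by rintro rfl; exact (Nat.not_odd_iff_even.mpr even_two) hodd)
    · have := hp.two_le
      rcases Nat.lt_or_ge p 3 with h | h
      · interval_cases p
        · exact absurd hodd (by decide)
      · exact h
  have hp2 : 2 ≤ p - 1 := by omega
  have hev : Even (p - 1) := Nat.Odd.sub_odd hodd odd_one
  have hpk : (p : k) = 0 := by
    rw [← map_natCast χ p, ZMod.natCast_self, map_zero]
  have hfin : ∀ c : ZMod p, ∑ t : (ZMod p)ˣ,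
      (x + χ (t : ZMod p) * (χ c * (x + χ c * y))) ^ a
        * (y - χ (t : ZMod p) * (x + χ c * y)) ^ b
      = -(x ^ a * y ^ b)
        - (if a + b = p - 1 then (-1 : k) ^ b * (χ c) ^ a * (x + χ c * y) ^ (p - 1) else 0) :=
    fun c => ucs_L2 χ a b hab hp2 x y (x + χ c * y) (χ c)
  rw [Finset.sum_congr rfl fun c _ => hfin c, ucs_L1 χ a b (by omega) x y]
  simp only [Finset.sum_sub_distrib, Finset.sum_const, Finset.card_univ, ZMod.card, nsmul_eq_mul,
    hpk, zero_mul]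
  by_cases h : a + b = p - 1
  · simp only [if_pos h]
    have hmul : ∀ c : ZMod p, (-1 : k) ^ b * (χ c) ^ a * (x + χ c * y) ^ (p - 1)
        = (-1 : k) ^ b * ((χ c) ^ a * (x + χ c * y) ^ (p - 1)) := fun c => by ring
    rw [Finset.sum_congr rfl fun c _ => hmul c, ← Finset.mul_sum,
      ucs_L3 χ a b h hev hp2 x y]
    by_cases hap : a = p - 1
    · have hb0 : b = 0 := by omega
      subst hb0
      simp only [if_pos hap, pow_zero, one_mul, mul_one]
      rw [hap, Even.neg_one_pow hev]
      ring
    · simp only [if_neg hap]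
      have hba : (-1 : k) ^ b * (-1 : k) ^ a = 1 := by
        rw [← pow_add]
        have hba' : b + a = p - 1 := by omega
        rw [hba', Even.neg_one_pow hev]
      linear_combination (x ^ a * y ^ b) * hba
  · simp only [if_neg h]
    have hap : a ≠ p - 1 := by omega
    simp only [if_neg hap]
    simp only [Finset.sum_const_zero]
    ring

end Core

/-! ### The conjugacy class of the standard unipotent element -/

section Conj

open Matrix

variable (p : ℕ) [Fact p.Prime]

def ucsMat (i : Option (ZMod p) × (ZMod p)ˣ) : Matrix (Fin 2) (Fin 2) (ZMod p) :=
  match i with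
  | (none, t) => !![1, 0; (t : ZMod p), 1]
  | (some c, t) =>
      !![1 + (t : ZMod p) * c, -(t : ZMod p); (t : ZMod p) * c ^ 2, 1 - (t : ZMod p) * c]

lemma ucsMat_det (i : Option (ZMod p) × (ZMod p)ˣ) : (ucsMat p i).det = 1 := by
  rcases i with ⟨c | c, t⟩ <;> simp only [ucsMat, det_fin_two_of] <;> ring

noncomputable def ucsGL (i : Option (ZMod p) × (ZMod p)ˣ) :
    Matrix.GeneralLinearGroup (Fin 2) (ZMod p) :=
  Matrix.GeneralLinearGroup.mkOfDetNeZero (ucsMat p i) (by rw [ucsMat_det]; exact one_ne_zero)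

lemma ucsGL_coe (i : Option (ZMod p) × (ZMod p)ˣ) :
    (↑(ucsGL p i) : Matrix (Fin 2) (Fin 2) (ZMod p)) = ucsMat p i := rfl

lemma ucsGL_inj : Function.Injective (ucsGL p) := by
  intro i1 i2 h
  have h' : ucsMat p i1 = ucsMat p i2 := by
    rw [← ucsGL_coe, ← ucsGL_coe, h]
  rcases i1 with ⟨c1 | c1, t1⟩ <;> rcases i2 with ⟨c2 | c2, t2⟩
  · have := congrFun (congrFun h' 1) 0
    simp only [ucsMat, Matrix.cons_val', Matrix.cons_val_zero, Matrix.cons_val_one,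
      Matrix.head_cons, Matrix.head_fin_const, Matrix.empty_val', Matrix.cons_val_fin_one] at this
    rw [Prod.ext_iff]
    exact ⟨rfl, Units.ext this⟩
  · have := congrFun (congrFun h' 0) 1
    simp only [ucsMat, Matrix.cons_val', Matrix.cons_val_zero, Matrix.cons_val_one,
      Matrix.head_cons, Matrix.empty_val', Matrix.cons_val_fin_one] at this
    exact absurd this.symm (neg_ne_zero.mpr t2.ne_zero)
  · have := congrFun (congrFun h' 0) 1
    simp only [ucsMat, Matrix.cons_val', Matrix.cons_val_zero, Matrix.cons_val_one,
      Matrix.head_cons, Matrix.empty_val', Matrix.cons_val_fin_one] at this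
    exact absurd this (neg_ne_zero.mpr t1.ne_zero)
  · have h01 := congrFun (congrFun h' 0) 1
    have h00 := congrFun (congrFun h' 0) 0
    simp only [ucsMat, Matrix.cons_val', Matrix.cons_val_zero, Matrix.cons_val_one,
      Matrix.head_cons, Matrix.empty_val', Matrix.cons_val_fin_one] at h01 h00
    have ht : t1 = t2 := Units.ext (by have := neg_injective h01; exact this)
    subst ht
    have hc : c1 = c2 := by
      have ht0 : (t1 : ZMod p) ≠ 0 := t1.ne_zero
      have h00' : (t1 : ZMod p) * c1 = (t1 : ZMod p) * c2 := by
        have := add_left_cancel h00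
        exact this
      exact mul_left_cancel₀ ht0 h00'
    rw [hc]

lemma ucsGL_isConj (d1 : Matrix.GeneralLinearGroup (Fin 2) (ZMod p))
    (hd : (↑d1 : Matrix (Fin 2) (Fin 2) (ZMod p)) = !![1, 1; 0, 1])
    (i : Option (ZMod p) × (ZMod p)ˣ) : IsConj d1 (ucsGL p i) := by
  rw [isConj_iff]
  rcases i with ⟨c | c, t⟩
  · have hdet : (!![0, 1; (t : ZMod p), 0]).det ≠ 0 := by
      rw [det_fin_two_of]
      simpa using t.ne_zero
    refine ⟨Matrix.GeneralLinearGroup.mkOfDetNeZero _ hdet, ?_⟩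
    rw [mul_inv_eq_iff_eq_mul]
    apply Units.ext
    show (!![0, 1; (t : ZMod p), 0] : Matrix (Fin 2) (Fin 2) (ZMod p)) * (↑d1 : Matrix (Fin 2) (Fin 2) (ZMod p))
      = (↑(ucsGL p (none, t)) : Matrix (Fin 2) (Fin 2) (ZMod p)) * !![0, 1; (t : ZMod p), 0]
    rw [hd, ucsGL_coe]
    show _ = ucsMat p (none, t) * _
    simp only [ucsMat]
    ext i j
    fin_cases i <;> fin_cases j <;>
      simp [Matrix.mul_apply, Fin.sum_univ_two]
  · have hdet : (!![1, 0; c, -((t⁻¹ : (ZMod p)ˣ) : ZMod p)]).det ≠ 0 := by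
      rw [det_fin_two_of]
      simp only [one_mul, zero_mul, sub_zero, neg_ne_zero]
      exact Units.ne_zero _
    refine ⟨Matrix.GeneralLinearGroup.mkOfDetNeZero _ hdet, ?_⟩
    rw [mul_inv_eq_iff_eq_mul]
    apply Units.ext
    show (!![1, 0; c, -((t⁻¹ : (ZMod p)ˣ) : ZMod p)] : Matrix (Fin 2) (Fin 2) (ZMod p)) * (↑d1 : Matrix (Fin 2) (Fin 2) (ZMod p))
      = (↑(ucsGL p (some c, t)) : Matrix (Fin 2) (Fin 2) (ZMod p)) * !![1, 0; c, -((t⁻¹ : (ZMod p)ˣ) : ZMod p)]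
    rw [hd, ucsGL_coe]
    show _ = ucsMat p (some c, t) * _
    simp only [ucsMat]
    have ht0 : (t : ZMod p) ≠ 0 := t.ne_zero
    rw [Matrix.mul_fin_two, Matrix.mul_fin_two]
    simp only [Units.val_inv_eq_inv_val]
    ext i j
    fin_cases i <;> fin_cases j <;>
      simp only [Matrix.cons_val', Matrix.cons_val_zero, Matrix.cons_val_one, Matrix.head_cons,
        Matrix.empty_val', Matrix.cons_val_fin_one, Matrix.head_fin_const, Fin.isValue,
        Matrix.of_apply, Fin.zero_eta, Fin.mk_one] <;>
      field_simp <;> ring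

lemma ucsGL_surj (d1 : Matrix.GeneralLinearGroup (Fin 2) (ZMod p))
    (hd : (↑d1 : Matrix (Fin 2) (Fin 2) (ZMod p)) = !![1, 1; 0, 1])
    (s : Matrix.GeneralLinearGroup (Fin 2) (ZMod p)) (h : IsConj d1 s) :
    ∃ i, ucsGL p i = s := by
  rw [isConj_iff] at h
  obtain ⟨u, hu⟩ := h
  have hu2 : u * d1 = s * u := by
    rw [← hu, mul_assoc, mul_assoc]
    simp
  have hu' : (↑u : Matrix (Fin 2) (Fin 2) (ZMod p)) * !![1, 1; 0, 1]
      = (↑s : Matrix (Fin 2) (Fin 2) (ZMod p)) * (↑u : Matrix (Fin 2) (Fin 2) (ZMod p)) := by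
    have := congrArg (Units.val) hu2
    rw [Units.val_mul, Units.val_mul, hd] at this
    exact this
  set M : Matrix (Fin 2) (Fin 2) (ZMod p) := ↑u with hM
  have hdet0 : M.det ≠ 0 := by
    have : IsUnit M.det := (Matrix.isUnit_iff_isUnit_det M).mp u.isUnit
    exact this.ne_zero
  rw [Matrix.det_fin_two] at hdet0
  have key : ∀ i : Option (ZMod p) × (ZMod p)ˣ,
      ucsMat p i * M = (↑s : Matrix (Fin 2) (Fin 2) (ZMod p)) * M → ucsGL p i = s := by
    intro i hi
    have : ucsGL p i * u = s * u := by
      apply Units.ext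
      rw [Units.val_mul, Units.val_mul, ucsGL_coe]
      exact hi
    exact mul_right_cancel this
  by_cases ha : M 0 0 = 0
  · have hc0 : M 1 0 ≠ 0 := by
      intro hc
      apply hdet0
      rw [ha, hc]
      ring
    have hb0 : M 0 1 ≠ 0 := by
      intro hb
      apply hdet0
      rw [ha, hb]
      ring
    have ht0 : -(M 1 0) ^ 2 / (M 0 0 * M 1 1 - M 0 1 * M 1 0) ≠ 0 := by
      apply div_ne_zero
      · simpa using hc0
      · intro hc
        apply hdet0
        rw [← hc]
    refine ⟨(none, Units.mk0 _ ht0), key _ ?_⟩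
    rw [← hu', ucsMat]
    ext i j
    fin_cases i <;> fin_cases j <;>
      simp only [Matrix.mul_apply, Fin.sum_univ_two, Matrix.cons_val', Matrix.cons_val_zero,
        Matrix.cons_val_one, Matrix.head_cons, Matrix.empty_val', Matrix.cons_val_fin_one,
        Matrix.head_fin_const, Units.val_mk0, Fin.isValue, ha, Matrix.of_apply, Fin.zero_eta,
        Fin.mk_one] <;>
      field_simp [ha, hc0, hb0, hdet0] <;> ring
  · have ht0 : -(M 0 0) ^ 2 / (M 0 0 * M 1 1 - M 0 1 * M 1 0) ≠ 0 := by
      apply div_ne_zero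
      · simpa using ha
      · intro hc
        apply hdet0
        rw [← hc]
    refine ⟨(some (M 1 0 / M 0 0), Units.mk0 _ ht0), key _ ?_⟩
    rw [← hu', ucsMat]
    ext i j
    fin_cases i <;> fin_cases j <;>
      simp only [Matrix.mul_apply, Fin.sum_univ_two, Matrix.cons_val', Matrix.cons_val_zero,
        Matrix.cons_val_one, Matrix.head_cons, Matrix.empty_val', Matrix.cons_val_fin_one,
        Matrix.head_fin_const, Units.val_mk0, Fin.isValue, Matrix.of_apply, Fin.zero_eta,
        Fin.mk_one] <;>
      field_simp <;> ring

end Conj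

/-! ### The polynomial identity for a single monomial -/

open MvPolynomial in
lemma ucs_mono {p : ℕ} [Fact p.Prime] {k : Type*} [Field k] [Infinite k]
    (χ : ZMod p →+* k) (hodd : Odd p) (a b : ℕ) (hab : a + b ≤ p - 1) (r : k) :
    ∑ i : Option (ZMod p) × (ZMod p)ˣ,
        (aeval fun m : Fin 2 => ∑ n : Fin 2, MvPolynomial.C (χ ((ucsMat p i) n m)) * X n)
          (MvPolynomial.C r * X 0 ^ a * X 1 ^ b)
      = (if a + b = p - 1 then (0 : k) else -1) • (MvPolynomial.C r * X 0 ^ a * X 1 ^ b) := by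
  apply MvPolynomial.funext
  intro z
  rw [map_sum]
  rw [MvPolynomial.smul_eval]
  have hterm : ∀ i : Option (ZMod p) × (ZMod p)ˣ,
      eval z ((aeval fun m : Fin 2 => ∑ n : Fin 2, MvPolynomial.C (χ ((ucsMat p i) n m)) * X n)
          (MvPolynomial.C r * X 0 ^ a * X 1 ^ b))
        = r * ((χ ((ucsMat p i) 0 0) * z 0 + χ ((ucsMat p i) 1 0) * z 1) ^ a
            * (χ ((ucsMat p i) 0 1) * z 0 + χ ((ucsMat p i) 1 1) * z 1) ^ b) := by
    intro i
    simp only [map_mul, map_pow, aeval_X, aeval_C, Fin.sum_univ_two,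
      MvPolynomial.algebraMap_eq, eval_add, eval_mul, eval_pow, eval_C, eval_X]
    ring
  rw [Finset.sum_congr rfl fun i _ => hterm i]
  rw [Fintype.sum_prod_type, Fintype.sum_option]
  have hnone : ∀ t : (ZMod p)ˣ,
      r * ((χ 1 * z 0 + χ (t : ZMod p) * z 1) ^ a
          * (χ 0 * z 0 + χ 1 * z 1) ^ b)
        = r * ((z 0 + χ (t : ZMod p) * z 1) ^ a * (z 1) ^ b) := by
    intro t
    simp only [map_one, map_zero, one_mul, zero_mul, zero_add]
  have hsome : ∀ (c : ZMod p) (t : (ZMod p)ˣ),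
      r * ((χ (1 + (t : ZMod p) * c) * z 0 + χ ((t : ZMod p) * c ^ 2) * z 1) ^ a
          * (χ (-(t : ZMod p)) * z 0 + χ (1 - (t : ZMod p) * c) * z 1) ^ b)
        = r * ((z 0 + χ (t : ZMod p) * (χ c * (z 0 + χ c * z 1))) ^ a
            * (z 1 - χ (t : ZMod p) * (z 0 + χ c * z 1)) ^ b) := by
    intro c t
    simp only [map_add, map_mul, map_neg, map_sub, map_pow, map_one]
    ring
  have einf : ∑ t : (ZMod p)ˣ,
      r * ((χ (ucsMat p (none, t) 0 0) * z 0 + χ (ucsMat p (none, t) 1 0) * z 1) ^ a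
          * (χ (ucsMat p (none, t) 0 1) * z 0 + χ (ucsMat p (none, t) 1 1) * z 1) ^ b)
      = ∑ t : (ZMod p)ˣ, r * ((z 0 + χ (t : ZMod p) * z 1) ^ a * (z 1) ^ b) :=
    Finset.sum_congr rfl fun t _ => hnone t
  have esome : ∑ c : ZMod p, ∑ t : (ZMod p)ˣ,
      r * ((χ (ucsMat p (some c, t) 0 0) * z 0 + χ (ucsMat p (some c, t) 1 0) * z 1) ^ a
          * (χ (ucsMat p (some c, t) 0 1) * z 0 + χ (ucsMat p (some c, t) 1 1) * z 1) ^ b)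
      = ∑ c : ZMod p, ∑ t : (ZMod p)ˣ,
          r * ((z 0 + χ (t : ZMod p) * (χ c * (z 0 + χ c * z 1))) ^ a
            * (z 1 - χ (t : ZMod p) * (z 0 + χ c * z 1)) ^ b) :=
    Finset.sum_congr rfl fun c _ => Finset.sum_congr rfl fun t _ => hsome c t
  rw [einf, esome]
  have h1 : ∑ t : (ZMod p)ˣ, r * ((z 0 + χ (t : ZMod p) * z 1) ^ a * (z 1) ^ b)
      = r * ∑ t : (ZMod p)ˣ, (z 0 + χ (t : ZMod p) * z 1) ^ a * (z 1) ^ b :=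
    (Finset.mul_sum _ _ _).symm
  have h2 : ∑ c : ZMod p, ∑ t : (ZMod p)ˣ,
        r * ((z 0 + χ (t : ZMod p) * (χ c * (z 0 + χ c * z 1))) ^ a
          * (z 1 - χ (t : ZMod p) * (z 0 + χ c * z 1)) ^ b)
      = r * ∑ c : ZMod p, ∑ t : (ZMod p)ˣ,
          (z 0 + χ (t : ZMod p) * (χ c * (z 0 + χ c * z 1))) ^ a
            * (z 1 - χ (t : ZMod p) * (z 0 + χ c * z 1)) ^ b := by
    rw [Finset.mul_sum]
    exact Finset.sum_congr rfl fun c _ => (Finset.mul_sum _ _ _).symm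
  rw [h1, h2]
  have h3 := ucs_core χ hodd a b hab (z 0) (z 1)
  have h4 : eval z (MvPolynomial.C r * X 0 ^ a * X 1 ^ b) = r * (z 0 ^ a * z 1 ^ b) := by
    simp only [eval_mul, eval_pow, eval_C, eval_X]
    ring
  rw [h4]
  calc r * ∑ t : (ZMod p)ˣ, (z 0 + χ (t : ZMod p) * z 1) ^ a * (z 1) ^ b
        + r * ∑ c : ZMod p, ∑ t : (ZMod p)ˣ,
            (z 0 + χ (t : ZMod p) * (χ c * (z 0 + χ c * z 1))) ^ a
              * (z 1 - χ (t : ZMod p) * (z 0 + χ c * z 1)) ^ b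
      = r * ((∑ c : ZMod p, ∑ t : (ZMod p)ˣ,
            (z 0 + χ (t : ZMod p) * (χ c * (z 0 + χ c * z 1))) ^ a
              * (z 1 - χ (t : ZMod p) * (z 0 + χ c * z 1)) ^ b)
          + ∑ t : (ZMod p)ˣ, (z 0 + χ (t : ZMod p) * z 1) ^ a * (z 1) ^ b) := by ring
    _ = r * ((if a + b = p - 1 then 0 else -1) * (z 0 ^ a * z 1 ^ b)) := by rw [h3]
    _ = (if a + b = p - 1 then 0 else -1) * (r * (z 0 ^ a * z 1 ^ b)) := by ring

/-! ### The main theorem -/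

open MvPolynomial Classical in
theorem unipotent_class_sum_action (p : ℕ) [Fact p.Prime] (hodd : Odd p)
    (k : Type*) [Field k] [IsAlgClosed k] [CharP k p]
    (i : ℕ) (hi : i ≤ p - 1)
    (d1 : Matrix.GeneralLinearGroup (Fin 2) (ZMod p))
    (hd : (↑d1 : Matrix (Fin 2) (Fin 2) (ZMod p)) = !![1, 1; 0, 1])
    (f : MvPolynomial (Fin 2) k) (hf : f.IsHomogeneous i) :
    ∑ s : Matrix.GeneralLinearGroup (Fin 2) (ZMod p),
        (if IsConj d1 s then
          aeval (fun m : Fin 2 =>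
            ∑ n : Fin 2,
              C (ZMod.castHom dvd_rfl k ((↑s : Matrix (Fin 2) (Fin 2) (ZMod p)) n m)) * X n) f
         else 0) =
      (if i = p - 1 then (0 : k) else -1) • f := by
  classical
  set χ : ZMod p →+* k := ZMod.castHom dvd_rfl k with hχ
  have step1 : (∑ s : Matrix.GeneralLinearGroup (Fin 2) (ZMod p),
      if IsConj d1 s then
        (aeval (fun m : Fin 2 =>
          ∑ n : Fin 2, C (χ ((↑s : Matrix (Fin 2) (Fin 2) (ZMod p)) n m)) * X n)) f
      else 0)
      = ∑ j : Option (ZMod p) × (ZMod p)ˣ,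
          (aeval (fun m : Fin 2 =>
            ∑ n : Fin 2,
              C (χ ((↑(ucsGL p j) : Matrix (Fin 2) (Fin 2) (ZMod p)) n m)) * X n)) f := by
    rw [← Finset.sum_filter]
    refine (Finset.sum_bij (fun j _ => ucsGL p j) ?_ ?_ ?_ ?_).symm
    · intro j _
      rw [Finset.mem_filter]
      exact ⟨Finset.mem_univ _, ucsGL_isConj p d1 hd j⟩
    · intro j1 _ j2 _ h
      exact ucsGL_inj p h
    · intro s hs
      rw [Finset.mem_filter] at hs
      obtain ⟨j, hj⟩ := ucsGL_surj p d1 hd s hs.2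
      exact ⟨j, Finset.mem_univ _, hj⟩
    · intro j _
      rfl
  rw [step1]
  -- decompose `f` into monomials
  conv_lhs => rw [← support_sum_monomial_coeff f]
  conv_rhs => rw [← support_sum_monomial_coeff f]
  rw [Finset.sum_congr rfl fun j (_ : j ∈ Finset.univ) => (map_sum _ _ f.support : _),
    Finset.sum_comm, Finset.smul_sum]
  refine Finset.sum_congr rfl fun d hd' => ?_
  have hdeg : d 0 + d 1 = i := by
    have h1 := hf (MvPolynomial.mem_support_iff.mp hd')
    rw [Finsupp.weight_apply, Finsupp.sum_fintype _ _ (fun n => by simp)] at h1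
    simpa [Fin.sum_univ_two] using h1
  have hmono : (monomial d) (coeff d f)
      = MvPolynomial.C (coeff d f) * X 0 ^ (d 0) * X 1 ^ (d 1) := by
    rw [monomial_eq, Finsupp.prod_fintype _ _ (fun n => pow_zero _), Fin.prod_univ_two,
      mul_assoc]
  rw [hmono]
  have := ucs_mono χ hodd (d 0) (d 1) (by omega) (coeff d f)
  rw [hdeg] at this
  exact this
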